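/- Fix ε ∈ (0,1). For x = (x₁, x₂) ∈ ℝ² with x₁ ≥ 1 and x₂ ≥ 1, let ‖x‖ = √(x₁² + x₂²), m(x) = (‖x‖/2)^{1+ε}, f(x) = m(x)/(2x₁²), g(x) = m(x)/(2x₂), and b(x) = −(1/(2x₂²) + 1/(x₁x₂))·(‖x‖²/2)^{1+ε}. Then, with a₁₁(x) = x₁² f(x)² and a₂₂(x) = g(x)², the drift condition of the Khasminskii non-explosion test holds with equality on the left-hand side: a₁₁(x) + a₂₂(x) + 2 x₁·(x₁ f(x)²) + 2 x₂·(b(x) − f(x) g(x)) ≤ 0. Equivalently, m(x)²·(1/(4x₁²) + 1/(4x₂²)) ≤ (1/x₂ + 2/x₁)·(‖x‖²/2)^{1+ε}. -/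
import Mathlib


/-- Verification of the second Khasminskii non-explosion (drift) condition in Example 1 of the
paper: for `x₁, x₂ ≥ 1`, with `‖x‖ = √(x₁² + x₂²)`, `m = (‖x‖/2)^{1+ε}`, `f = m/(2x₁²)`,
`g = m/(2x₂)`, `b = -(1/(2x₂²) + 1/(x₁x₂))·(‖x‖²/2)^{1+ε}`, `a₁₁ = x₁²f²`, `a₂₂ = g²`, one has
`a₁₁ + a₂₂ + 2x₁·(x₁f²) + 2x₂·(b - fg) ≤ 0`; equivalently,
`m²·(1/(4x₁²) + 1/(4x₂²)) ≤ (1/x₂ + 2/x₁)·(‖x‖²/2)^{1+ε}`. -/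
theorem example_one_drift_condition
    (ε : ℝ) (hε : ε ∈ Set.Ioo (0 : ℝ) 1)
    (x₁ x₂ : ℝ) (hx₁ : 1 ≤ x₁) (hx₂ : 1 ≤ x₂)
    (nrm m f g b a₁₁ a₂₂ : ℝ)
    (hnrm : nrm = Real.sqrt (x₁ ^ 2 + x₂ ^ 2))
    (hm : m = (nrm / 2) ^ (1 + ε))
    (hf : f = m / (2 * x₁ ^ 2))
    (hg : g = m / (2 * x₂))
    (hb : b = -(1 / (2 * x₂ ^ 2) + 1 / (x₁ * x₂)) * (nrm ^ 2 / 2) ^ (1 + ε))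
    (ha₁₁ : a₁₁ = x₁ ^ 2 * f ^ 2)
    (ha₂₂ : a₂₂ = g ^ 2) :
    a₁₁ + a₂₂ + 2 * x₁ * (x₁ * f ^ 2) + 2 * x₂ * (b - f * g) ≤ 0 ∧
    m ^ 2 * (1 / (4 * x₁ ^ 2) + 1 / (4 * x₂ ^ 2))
      ≤ (1 / x₂ + 2 / x₁) * (nrm ^ 2 / 2) ^ (1 + ε) := by
  have hx₁0 : (0:ℝ) < x₁ := lt_of_lt_of_le one_pos hx₁
  have hx₂0 : (0:ℝ) < x₂ := lt_of_lt_of_le one_pos hx₂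
  have hnrm0 : 0 ≤ nrm := hnrm ▸ Real.sqrt_nonneg _
  have hm2 : m ^ 2 = (nrm ^ 2 / 4) ^ (1 + ε) := by
    have h0 : (0:ℝ) ≤ nrm / 2 := by linarith
    rw [hm, ← Real.rpow_natCast ((nrm / 2) ^ (1 + ε)) 2,
      ← Real.rpow_mul h0, mul_comm, Real.rpow_mul h0, Real.rpow_natCast]
    ring_nf
  have hp : (nrm ^ 2 / 2) ^ (1 + ε) = 2 ^ (1 + ε) * (nrm ^ 2 / 4) ^ (1 + ε) := by
    rw [← Real.mul_rpow (by norm_num) (by positivity)]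
    ring_nf
  have ht : 0 ≤ (nrm ^ 2 / 4) ^ (1 + ε) := Real.rpow_nonneg (by positivity) _
  have h2 : (2:ℝ) ≤ 2 ^ (1 + ε) := by
    calc (2:ℝ) = 2 ^ (1:ℝ) := (Real.rpow_one 2).symm
    _ ≤ 2 ^ (1 + ε) := Real.rpow_le_rpow_of_exponent_le one_le_two (by linarith [hε.1])
  have hB : (0:ℝ) ≤ 1 / x₂ + 2 / x₁ := by positivity
  have key : 1 / (4 * x₁ ^ 2) + 1 / (4 * x₂ ^ 2) ≤ 2 * (1 / x₂ + 2 / x₁) := by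
    have h1 : 1 / (4 * x₁ ^ 2) ≤ 2 / x₁ := by
      rw [div_le_div_iff₀ (by positivity) hx₁0]; nlinarith
    have h2' : 1 / (4 * x₂ ^ 2) ≤ 1 / x₂ := by
      rw [div_le_div_iff₀ (by positivity) hx₂0]; nlinarith
    linarith
  have second : m ^ 2 * (1 / (4 * x₁ ^ 2) + 1 / (4 * x₂ ^ 2))
      ≤ (1 / x₂ + 2 / x₁) * (nrm ^ 2 / 2) ^ (1 + ε) := by
    rw [hm2, hp]
    calc (nrm ^ 2 / 4) ^ (1 + ε) * (1 / (4 * x₁ ^ 2) + 1 / (4 * x₂ ^ 2))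
        ≤ (nrm ^ 2 / 4) ^ (1 + ε) * (2 * (1 / x₂ + 2 / x₁)) :=
          mul_le_mul_of_nonneg_left key ht
      _ ≤ (1 / x₂ + 2 / x₁) * (2 ^ (1 + ε) * (nrm ^ 2 / 4) ^ (1 + ε)) := by
          nlinarith [mul_nonneg hB ht]
  refine ⟨?_, second⟩
  have expand : a₁₁ + a₂₂ + 2 * x₁ * (x₁ * f ^ 2) + 2 * x₂ * (b - f * g)
      = m ^ 2 * (1 / (4 * x₁ ^ 2) + 1 / (4 * x₂ ^ 2))
        - (1 / x₂ + 2 / x₁) * (nrm ^ 2 / 2) ^ (1 + ε) := by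
    rw [ha₁₁, ha₂₂, hf, hg, hb]
    field_simp
    ring
  linarith [second, expand.le, expand.ge]
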